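/- arXiv:2307.14486 — 2 statements merged into one kernel-verified Lean document; each statement's English description precedes it below -/
import Mathlib

section
/- Let d' be a positive integer with d' ≡ 0 (mod 3). The number of integers b₃ with 0 ≤ b₃ < 6d', gcd(b₃, 6d') = 1, and b₃² + 4d' ≡ 1 (mod 12d') equals the number of integers b₄ with 0 ≤ b₄ < 2d' and b₄² ≡ 1 (mod 4d'). -/
/-- For `3 ∣ d'`, the number of `b₃ ∈ [0, 6d')` with `gcd(b₃, 6d') = 1` and
`b₃² + 4d' ≡ 1 (mod 12d')` equals the number of `b₄ ∈ [0, 2d')` with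
`b₄² ≡ 1 (mod 4d')`. -/
theorem stmt_9 (d' : ℕ) (hd' : 0 < d') (h3 : 3 ∣ d') :
    ((Finset.range (6 * d')).filter
        (fun b : ℕ => Nat.gcd b (6 * d') = 1 ∧
          (b : ZMod (12 * d')) ^ 2 + 4 * d' = 1)).card
      = ((Finset.range (2 * d')).filter
        (fun b : ℕ => ((b : ℕ) : ZMod (4 * d')) ^ 2 = 1)).card := by
  have hd2 : 0 < 2 * d' := by omega
  have h3z : (3 : ℤ) ∣ (d' : ℤ) := by exact_mod_cast h3
  have hdz : (0 : ℤ) < (d' : ℤ) := by exact_mod_cast hd'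
  have hDne : (2 * (d' : ℤ)) ≠ 0 := by positivity
  have hp3 : Prime (3 : ℤ) := by norm_num
  -- conversion lemmas
  have hL : ∀ b : ℕ, ((b : ZMod (12 * d')) ^ 2 + 4 * (d' : ZMod (12 * d')) = 1) ↔
      ((12 * d' : ℤ)) ∣ ((b : ℤ) ^ 2 + 4 * (d' : ℤ) - 1) := by
    intro b
    rw [show ((b : ZMod (12 * d')) ^ 2 + 4 * (d' : ZMod (12 * d')))
          = ((b ^ 2 + 4 * d' : ℕ) : ZMod (12 * d')) by push_cast; ring,
        show (1 : ZMod (12 * d')) = ((1 : ℕ) : ZMod (12 * d')) by norm_cast,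
        ZMod.natCast_eq_natCast_iff, Nat.modEq_iff_dvd]
    constructor <;> intro h
    · have h' := dvd_neg.mpr h
      convert h' using 1
      rfl; all_goals push_cast; all_goals ring
    · have h' := dvd_neg.mpr h
      convert h' using 1
      rfl; all_goals push_cast; all_goals ring
  have hR : ∀ b : ℕ, ((b : ZMod (4 * d')) ^ 2 = 1) ↔
      ((4 * d' : ℤ)) ∣ ((b : ℤ) ^ 2 - 1) := by
    intro b
    rw [show ((b : ZMod (4 * d')) ^ 2) = ((b ^ 2 : ℕ) : ZMod (4 * d')) by push_cast; ring,
        show (1 : ZMod (4 * d')) = ((1 : ℕ) : ZMod (4 * d')) by norm_cast,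
        ZMod.natCast_eq_natCast_iff, Nat.modEq_iff_dvd]
    constructor <;> intro h
    · have h' := dvd_neg.mpr h
      convert h' using 1
      rfl; all_goals push_cast; all_goals ring
    · have h' := dvd_neg.mpr h
      convert h' using 1
      rfl; all_goals push_cast; all_goals ring
  apply Finset.card_bij (fun b _ => b % (2 * d'))
  · -- maps into the target
    intro b hb
    simp only [Finset.mem_filter, Finset.mem_range] at hb ⊢
    obtain ⟨hblt, hgcd, hcong⟩ := hb
    refine ⟨Nat.mod_lt _ hd2, ?_⟩
    rw [hR]
    rw [hL] at hcong
    obtain ⟨u, hu⟩ := hcong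
    have hbz : (2 * (d' : ℤ)) * ((b / (2 * d') : ℕ) : ℤ) + ((b % (2 * d') : ℕ) : ℤ)
        = (b : ℤ) := by
      exact_mod_cast Nat.div_add_mod b (2 * d')
    set q : ℤ := ((b / (2 * d') : ℕ) : ℤ)
    set r : ℤ := ((b % (2 * d') : ℕ) : ℤ)
    refine ⟨3 * u - 1 - q * ((d' : ℤ) * q + r), ?_⟩
    rw [← hbz] at hu
    linear_combination hu
  · -- injective
    intro b1 hb1 b2 hb2 heq
    simp only [Finset.mem_filter, Finset.mem_range] at hb1 hb2
    obtain ⟨hb1lt, hgcd1, hcong1⟩ := hb1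
    obtain ⟨hb2lt, hgcd2, hcong2⟩ := hb2
    rw [hL] at hcong1 hcong2
    have hmod : (2 * d' : ℤ) ∣ (b2 : ℤ) - (b1 : ℤ) := (Nat.modEq_iff_dvd).mp heq
    obtain ⟨k, hk⟩ := hmod
    have hb1z : (b1 : ℤ) < 6 * d' := by exact_mod_cast hb1lt
    have hb2z : (b2 : ℤ) < 6 * d' := by exact_mod_cast hb2lt
    have hb1n : (0 : ℤ) ≤ (b1 : ℤ) := by positivity
    have hb2n : (0 : ℤ) ≤ (b2 : ℤ) := by positivity
    have hkb : -3 < k ∧ k < 3 := by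
      constructor <;> nlinarith [hdz, hk]
    have hdvd : (12 * (d' : ℤ)) ∣ ((b2 : ℤ) ^ 2 - (b1 : ℤ) ^ 2) := by
      have h := dvd_sub hcong2 hcong1
      convert h using 1; rfl; ring
    have hfact : ((b2 : ℤ) ^ 2 - (b1 : ℤ) ^ 2) = (2 * (d' : ℤ)) * (k * ((b1 : ℤ) + b2)) := by
      linear_combination ((b1 : ℤ) + b2) * hk
    have h6 : (6 : ℤ) ∣ k * ((b1 : ℤ) + b2) := by
      rw [hfact, show (12 * (d' : ℤ)) = (2 * (d' : ℤ)) * 6 by ring] at hdvd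
      exact (mul_dvd_mul_iff_left hDne).mp hdvd
    have h3k : (3 : ℤ) ∣ k * ((b1 : ℤ) + b2) := dvd_trans ⟨2, by ring⟩ h6
    have h3b2 : ¬ (3 : ℤ) ∣ (b2 : ℤ) := by
      intro hc
      have hc' : (3 : ℕ) ∣ b2 := by exact_mod_cast hc
      have h36 : (3 : ℕ) ∣ 6 * d' := ⟨2 * d', by ring⟩
      have hg := Nat.dvd_gcd hc' h36
      rw [hgcd2] at hg
      omega
    have h3sum : ¬ (3 : ℤ) ∣ ((b1 : ℤ) + b2) := by
      intro hc
      have h3n : (3 : ℤ) ∣ 2 * (d' : ℤ) := h3z.mul_left 2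
      have h3diff : (3 : ℤ) ∣ (b2 : ℤ) - b1 := h3n.trans ⟨k, hk⟩
      have h2b : (3 : ℤ) ∣ 2 * (b2 : ℤ) := by
        have h := dvd_add hc h3diff
        convert h using 1; rfl; ring
      exact h3b2 ((hp3.dvd_mul.mp h2b).resolve_left (by norm_num))
    have h3kk : (3 : ℤ) ∣ k := (hp3.dvd_mul.mp h3k).resolve_right h3sum
    have hk0 : k = 0 := by omega
    have hbb : (b2 : ℤ) = b1 := by rw [hk0] at hk; linarith
    exact_mod_cast hbb.symm
  · -- surjective
    intro r hr
    simp only [Finset.mem_filter, Finset.mem_range] at hr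
    obtain ⟨hrlt, hrc⟩ := hr
    rw [hR] at hrc
    obtain ⟨t, ht⟩ := hrc
    have h34 : (3 : ℤ) ∣ 4 * (d' : ℤ) := h3z.mul_left 4
    have h3r : ¬ (3 : ℤ) ∣ (r : ℤ) := by
      intro hc
      have h1 : (3 : ℤ) ∣ (r : ℤ) ^ 2 - 1 := h34.trans ⟨t, ht⟩
      have h2 : (3 : ℤ) ∣ (r : ℤ) ^ 2 := by
        obtain ⟨c, hc'⟩ := hc
        exact ⟨3 * c ^ 2, by rw [hc']; ring⟩
      have hone : (3 : ℤ) ∣ 1 := by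
        have h := dvd_sub h2 h1
        convert h using 1; rfl; ring
      norm_num at hone
    obtain ⟨m, hm3, hmdvd⟩ : ∃ m : ℕ, m < 3 ∧ (3 : ℤ) ∣ t + (m : ℤ) * r + 1 := by
      have hr3 : (r : ℤ) % 3 = 1 ∨ (r : ℤ) % 3 = 2 := by omega
      have ht3 : t % 3 = 0 ∨ t % 3 = 1 ∨ t % 3 = 2 := by omega
      rcases hr3 with h1 | h1 <;> rcases ht3 with h2 | h2 | h2
      · exact ⟨2, by omega, by push_cast; omega⟩
      · exact ⟨1, by omega, by push_cast; omega⟩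
      · exact ⟨0, by omega, by push_cast; omega⟩
      · exact ⟨1, by omega, by push_cast; omega⟩
      · exact ⟨2, by omega, by push_cast; omega⟩
      · exact ⟨0, by omega, by push_cast; omega⟩
    have hcong : (12 * (d' : ℤ)) ∣ (((r + 2 * d' * m : ℕ) : ℤ) ^ 2 + 4 * (d' : ℤ) - 1) := by
      obtain ⟨y, hy⟩ := hmdvd
      obtain ⟨w, hw⟩ := (h3z.mul_right ((m : ℤ) ^ 2) : (3 : ℤ) ∣ (d' : ℤ) * (m : ℤ) ^ 2)
      refine ⟨y + w, ?_⟩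
      push_cast
      linear_combination 4 * (d' : ℤ) * hy + 4 * (d' : ℤ) * hw + ht
    refine ⟨r + 2 * d' * m, ?_, ?_⟩
    · simp only [Finset.mem_filter, Finset.mem_range]
      refine ⟨by have := Nat.mul_le_mul_left (2 * d') (show m ≤ 2 by omega); omega, ?_, ?_⟩
      · -- gcd = 1
        by_contra hg
        have hp : (Nat.gcd (r + 2 * d' * m) (6 * d')).minFac.Prime := Nat.minFac_prime hg
        set p := (Nat.gcd (r + 2 * d' * m) (6 * d')).minFac with hpdef
        have hpb : p ∣ r + 2 * d' * m := (Nat.minFac_dvd _).trans (Nat.gcd_dvd_left _ _)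
        have hp6 : p ∣ 6 * d' := (Nat.minFac_dvd _).trans (Nat.gcd_dvd_right _ _)
        have hp4 : p ∣ 4 * d' := by
          rcases (Nat.Prime.dvd_mul hp).mp hp6 with h6 | hd
          · have hple : p ≤ 6 := Nat.le_of_dvd (by norm_num) h6
            have hp2 := hp.two_le
            have hp23 : p = 2 ∨ p = 3 := by
              interval_cases p <;> first | omega | (exfalso; revert hp; decide)
            rcases hp23 with h' | h'
            · rw [h']; exact ⟨2 * d', by ring⟩
            · rw [h']; exact Dvd.dvd.mul_left h3 4
          · exact Dvd.dvd.mul_left hd 4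
        have hp12 : p ∣ 12 * d' := hp6.trans ⟨2, by ring⟩
        have hp1 : (p : ℤ) ∣ 1 := by
          have h1 : (p : ℤ) ∣ ((r + 2 * d' * m : ℕ) : ℤ) ^ 2 + 4 * (d' : ℤ) - 1 :=
            (by exact_mod_cast hp12 : (p : ℤ) ∣ 12 * (d' : ℤ)).trans hcong
          have h2 : (p : ℤ) ∣ ((r + 2 * d' * m : ℕ) : ℤ) ^ 2 := by
            have hb : (p : ℤ) ∣ ((r + 2 * d' * m : ℕ) : ℤ) := by exact_mod_cast hpb
            exact hb.pow (by norm_num)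
          have h3' : (p : ℤ) ∣ 4 * (d' : ℤ) := by exact_mod_cast hp4
          have h := dvd_sub (dvd_sub h1 h3') h2
          have h' : (p : ℤ) ∣ -1 := by convert h using 1; rfl; ring
          exact dvd_neg.mp h'
        have hp1' : p ∣ 1 := by exact_mod_cast hp1
        have := Nat.le_of_dvd one_pos hp1'
        have := hp.two_le
        omega
      · rw [hL]
        exact hcong
    · rw [Nat.add_mul_mod_self_left, Nat.mod_eq_of_lt hrlt]
end

section
/- Let d' ≥ 1. The number of integers b₃ with 0 ≤ b₃ < 6d', gcd(b₃, 6d') = 1, and b₃² ≡ 1 (mod 12d') equals half the number of units x ∈ (ℤ/12d')^× with x² = 1. -/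
/-- The number of `b₃ ∈ [0, 6d')` with `gcd(b₃, 6d') = 1` and
`b₃² ≡ 1 (mod 12d')` equals half the number of square roots of unity in
`(ℤ/12d')ˣ`. -/
theorem stmt_10 (d' : ℕ) (hd' : 1 ≤ d') :
    2 * ((Finset.range (6 * d')).filter
        (fun b : ℕ => Nat.gcd b (6 * d') = 1 ∧ (b : ZMod (12 * d')) ^ 2 = 1)).card
      = Nat.card {x : (ZMod (12 * d'))ˣ // x ^ 2 = 1} := by
  haveI : NeZero (12 * d') := ⟨by omega⟩
  have hnN : (6 * d') ∣ 12 * d' := ⟨2, by ring⟩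
  have hsq : ∀ b : ℕ, ((b + 6 * d' : ℕ) : ZMod (12 * d')) ^ 2
      = (b : ZMod (12 * d')) ^ 2 := by
    intro b
    have h : (b + 6 * d') ^ 2 = b ^ 2 + (b + 3 * d') * (12 * d') := by ring
    calc ((b + 6 * d' : ℕ) : ZMod (12 * d')) ^ 2
        = ((b ^ 2 + (b + 3 * d') * (12 * d') : ℕ) : ZMod (12 * d')) := by
          rw [← Nat.cast_pow, h]
      _ = (b : ZMod (12 * d')) ^ 2 := by
          rw [Nat.cast_add, Nat.cast_mul (b + 3 * d') (12 * d'), ZMod.natCast_self,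
            mul_zero, add_zero, Nat.cast_pow]
  have hgcd : ∀ b : ℕ, (b : ZMod (12 * d')) ^ 2 = 1 → Nat.gcd b (6 * d') = 1 := by
    intro b hb
    have hu : IsUnit (b : ZMod (12 * d')) :=
      IsUnit.of_mul_eq_one (b : ZMod (12 * d')) (by rw [← sq, hb])
    exact Nat.Coprime.coprime_dvd_right hnN ((ZMod.isUnit_iff_coprime b (12 * d')).mp hu)
  set T := (Finset.range (6 * d')).filter
        (fun b : ℕ => Nat.gcd b (6 * d') = 1 ∧ (b : ZMod (12 * d')) ^ 2 = 1) with hT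
  set S := (Finset.range (12 * d')).filter
        (fun b : ℕ => (b : ZMod (12 * d')) ^ 2 = 1) with hS
  have hSeq : S = T ∪ T.image (· + 6 * d') := by
    ext b
    simp only [hS, hT, Finset.mem_union, Finset.mem_image, Finset.mem_filter,
      Finset.mem_range]
    constructor
    · rintro ⟨hb, hsq1⟩
      by_cases hlt : b < 6 * d'
      · exact Or.inl ⟨hlt, hgcd b hsq1, hsq1⟩
      · right
        have hb' : b - 6 * d' + 6 * d' = b := by omega
        have h2 : ((b - 6 * d' : ℕ) : ZMod (12 * d')) ^ 2 = 1 := by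
          rw [← hsq (b - 6 * d'), hb']; exact hsq1
        exact ⟨b - 6 * d', ⟨by omega, hgcd _ h2, h2⟩, by omega⟩
    · rintro (⟨hb, hg, hs⟩ | ⟨a, ⟨ha, hg, hs⟩, rfl⟩)
      · exact ⟨by omega, hs⟩
      · exact ⟨by omega, by rw [hsq]; exact hs⟩
  have hdisj : Disjoint T (T.image (· + 6 * d')) := by
    rw [Finset.disjoint_left]
    rintro b hb hb'
    rw [hT] at hb
    rw [Finset.mem_image] at hb'
    obtain ⟨a, ha, rfl⟩ := hb'
    have := Finset.mem_range.mp (Finset.mem_filter.mp hb).1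
    omega
  have hcard : S.card = 2 * T.card := by
    rw [hSeq, Finset.card_union_of_disjoint hdisj,
      Finset.card_image_of_injective _ (add_left_injective _)]
    ring
  have h2 : Nat.card {x : (ZMod (12 * d'))ˣ // x ^ 2 = 1} = S.card := by
    rw [Nat.card_eq_fintype_card, Fintype.card_subtype]
    refine Finset.card_bij (fun x _ => (x : ZMod (12 * d')).val) ?_ ?_ ?_
    · intro x hx
      simp only [hS, Finset.mem_filter, Finset.mem_range]
      refine ⟨ZMod.val_lt _, ?_⟩
      rw [ZMod.natCast_val, ZMod.cast_id]
      simp only [Finset.mem_filter, Finset.mem_univ, true_and] at hx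
      rw [← Units.val_pow_eq_pow_val, hx, Units.val_one]
    · intro x _ y _ h
      exact Units.ext (ZMod.val_injective _ h)
    · intro b hb
      simp only [hS, Finset.mem_filter, Finset.mem_range] at hb
      obtain ⟨hblt, hbsq⟩ := hb
      have hu : IsUnit (b : ZMod (12 * d')) :=
        IsUnit.of_mul_eq_one (b : ZMod (12 * d')) (by rw [← sq, hbsq])
      refine ⟨hu.unit, ?_, ?_⟩
      · simp only [Finset.mem_filter, Finset.mem_univ, true_and]
        exact Units.ext (by rw [Units.val_pow_eq_pow_val, IsUnit.unit_spec, hbsq,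
          Units.val_one])
      · show ((hu.unit : (ZMod (12 * d'))ˣ) : ZMod (12 * d')).val = b
        rw [IsUnit.unit_spec, ZMod.val_cast_of_lt hblt]
  rw [h2, hcard]
end
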